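/- The number of non-identity involutions in GL(2,𝔽_q) is q²−1 when q is even, and q²+q+1 when q is odd. -/

import Mathlib

set_option linter.unusedSectionVars false


open Finset

lemma pair_count {F : Type} [Field F] [Fintype F] [DecidableEq F] (t : F) :
    (univ.filter (fun p : F × F => p.1 * p.2 = t)).card
      = Fintype.card F - 1 + if t = 0 then Fintype.card F else 0 := by
  have hq1 : 1 ≤ Fintype.card F := Fintype.card_pos
  by_cases ht : t = 0
  · subst ht
    simp only [if_pos rfl, mul_eq_zero]
    rw [Finset.filter_or]
    have h1 : (univ.filter (fun p : F × F => p.1 = 0)) = {0} ×ˢ univ := by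
      ext p; simp [Prod.ext_iff, eq_comm]
    have h2 : (univ.filter (fun p : F × F => p.2 = 0)) = univ ×ˢ {0} := by
      ext p; simp [Prod.ext_iff, eq_comm]
    have h3 : (univ.filter (fun p : F × F => p.1 = 0)) ∩ (univ.filter (fun p : F × F => p.2 = 0)) = {(0,0)} := by
      ext p; simp [Prod.ext_iff, and_comm]
    have := Finset.card_union_add_card_inter (univ.filter (fun p : F × F => p.1 = 0))
      (univ.filter (fun p : F × F => p.2 = 0))
    rw [h3, h1, h2] at this
    simp only [Finset.card_singleton, Finset.card_product, Finset.card_singleton,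
      Finset.card_univ, one_mul, mul_one] at this
    rw [h1, h2]; simp only [if_true]
    omega
  · rw [if_neg ht]
    have : (univ.filter (fun p : F × F => p.1 * p.2 = t)) = (univ.erase (0:F)).image (fun b => (b, b⁻¹ * t)) := by
      ext p
      simp only [mem_filter, mem_univ, true_and, mem_image, mem_erase, and_true, Prod.ext_iff]
      constructor
      · rintro h
        have hp1 : p.1 ≠ 0 := by
          intro h0; rw [h0, zero_mul] at h; exact ht h.symm
        exact ⟨p.1, hp1, rfl, by field_simp; rw [← h]⟩
      · rintro ⟨b, hb, h1, h2⟩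
        rw [← h1, ← h2, ← h1] at *
        field_simp
    rw [this, Finset.card_image_of_injective _ (fun a b h => (Prod.ext_iff.mp h).1),
      Finset.card_erase_of_mem (mem_univ _), Finset.card_univ, add_zero]

lemma triple_count {F : Type} [Field F] [Fintype F] [DecidableEq F] :
    (univ.filter (fun p : F × F × F => p.1 * p.1 + p.2.1 * p.2.2 = 1)).card
      = Fintype.card F * (Fintype.card F - 1)
        + Fintype.card F * (univ.filter (fun a : F => a * a = 1)).card := by
  rw [Finset.card_eq_sum_card_fiberwise (f := fun p : F × F × F => p.1) (t := univ) (fun x _ => mem_univ _)]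
  have key : ∀ a : F, (univ.filter (fun p : F × F × F => p.1 * p.1 + p.2.1 * p.2.2 = 1)
        |>.filter (fun p => p.1 = a)).card
      = Fintype.card F - 1 + if a * a = 1 then Fintype.card F else 0 := by
    intro a
    have himg : (univ.filter (fun p : F × F × F => p.1 * p.1 + p.2.1 * p.2.2 = 1)
          |>.filter (fun p => p.1 = a))
        = (univ.filter (fun p : F × F => p.1 * p.2 = 1 - a * a)).image (fun p => (a, p.1, p.2)) := by
      ext p
      simp only [mem_filter, mem_univ, true_and, mem_image, Prod.ext_iff]
      constructor
      · rintro ⟨h1, rfl⟩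
        exact ⟨(p.2.1, p.2.2), by linear_combination h1, rfl, rfl, rfl⟩
      · rintro ⟨b, hb, rfl, h2, h3⟩
        rw [← h2, ← h3]
        exact ⟨by linear_combination hb, rfl⟩
    rw [himg, Finset.card_image_of_injective _ (by intro x y h; simpa [Prod.ext_iff] using h),
      pair_count]
    congr 1
    have : (1 - a * a = 0) ↔ (a * a = 1) := by constructor <;> intro h <;> linear_combination -h
    simp [this]
  rw [Finset.sum_congr rfl (fun a _ => key a)]
  rw [Finset.sum_add_distrib, Finset.sum_const, Finset.card_univ, smul_eq_mul,
    Finset.sum_ite, Finset.sum_const, Finset.sum_const]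
  simp [mul_comm]

def glEquiv {F : Type} [Field F] [Fintype F] [DecidableEq F] :
    {A : GL (Fin 2) F // A * A = 1 ∧ A ≠ 1}
      ≃ {M : Matrix (Fin 2) (Fin 2) F // M * M = 1 ∧ M ≠ 1} where
  toFun A := ⟨(A.1 : Matrix (Fin 2) (Fin 2) F), by
    obtain ⟨h1, h2⟩ := A.2
    exact ⟨by simpa using congrArg Units.val h1, fun h => h2 (Units.ext h)⟩⟩
  invFun M := ⟨⟨M.1, M.1, M.2.1, M.2.1⟩, by
    exact ⟨Units.ext (by simpa using M.2.1), fun h => M.2.2 (congrArg Units.val h)⟩⟩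
  left_inv A := Subtype.ext (Units.ext rfl)
  right_inv M := Subtype.ext rfl

def mEquiv {F : Type} [Field F] [Fintype F] [DecidableEq F] :
    Matrix (Fin 2) (Fin 2) F ≃ F × F × F × F where
  toFun M := (M 0 0, M 0 1, M 1 0, M 1 1)
  invFun p := !![p.1, p.2.1; p.2.2.1, p.2.2.2]
  left_inv M := (Matrix.eta_fin_two M).symm
  right_inv p := by simp

lemma cond_iff {F : Type} [Field F] [Fintype F] [DecidableEq F]
    (M : Matrix (Fin 2) (Fin 2) F) :
    M * M = 1 ↔ (M 0 0 * M 0 0 + M 0 1 * M 1 0 = 1 ∧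
      M 0 0 * M 0 1 + M 0 1 * M 1 1 = 0 ∧
      M 1 0 * M 0 0 + M 1 1 * M 1 0 = 0 ∧
      M 1 0 * M 0 1 + M 1 1 * M 1 1 = 1) := by
  rw [← Matrix.ext_iff]
  simp only [Matrix.mul_apply, Fin.sum_univ_two, Matrix.one_apply, Fin.forall_fin_two]
  norm_num
  tauto

variable {F : Type} [Field F] [Fintype F] [DecidableEq F]

def quadCond (p : F × F × F × F) : Prop :=
  p.1 * p.1 + p.2.1 * p.2.2.1 = 1 ∧
  p.1 * p.2.1 + p.2.1 * p.2.2.2 = 0 ∧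
  p.2.2.1 * p.1 + p.2.2.2 * p.2.2.1 = 0 ∧
  p.2.2.1 * p.2.1 + p.2.2.2 * p.2.2.2 = 1

instance : DecidablePred (quadCond (F := F)) := fun p => by unfold quadCond; infer_instance

lemma card_eq_quad :
    Fintype.card {M : Matrix (Fin 2) (Fin 2) F // M * M = 1}
      = (univ.filter (quadCond (F := F))).card := by
  rw [Fintype.card_congr (mEquiv.subtypeEquiv (q := quadCond) (fun M => by rw [cond_iff]; exact Iff.rfl))]
  rw [Fintype.card_subtype]

lemma char_two_zero (h2 : ringChar F = 2) : (2 : F) = 0 := by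
  have h := ringChar.spec F
  rw [h2] at h
  exact (h 2).mpr dvd_rfl

lemma quad_char2 (h2 : ringChar F = 2) (p : F × F × F × F) :
    quadCond p ↔ (p.2.2.2 = p.1 ∧ p.1 * p.1 + p.2.1 * p.2.2.1 = 1) := by
  obtain ⟨a, b, c, d⟩ := p
  have h0 : (2 : F) = 0 := char_two_zero h2
  unfold quadCond
  simp only
  constructor
  · rintro ⟨e1, e2, e3, e4⟩
    have hda : (d - a) * (d - a) = 0 := by linear_combination e4 - e1 + (a*a - a*d) * h0
    exact ⟨sub_eq_zero.mp (mul_self_eq_zero.mp hda), e1⟩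
  · rintro ⟨rfl, e1⟩
    exact ⟨e1, by linear_combination d * b * h0, by linear_combination d * c * h0,
      by linear_combination e1⟩

lemma roots_char2 (h2 : ringChar F = 2) :
    (univ.filter (fun a : F => a * a = 1)).card = 1 := by
  have h0 : (2 : F) = 0 := char_two_zero h2
  have : (univ.filter (fun a : F => a * a = 1)) = {1} := by
    ext a
    simp only [mem_filter, mem_univ, true_and, mem_singleton, mul_self_eq_one_iff]
    constructor
    · rintro (rfl | rfl)
      · rfl
      · linear_combination -h0
    · rintro rfl; left; rfl
  rw [this, Finset.card_singleton]

lemma roots_odd (h2 : ringChar F ≠ 2) :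
    (univ.filter (fun a : F => a * a = 1)).card = 2 := by
  have hne : (-1 : F) ≠ 1 := by
    intro h
    have h0 : (2 : F) = 0 := by linear_combination -h
    have hd : ringChar F ∣ 2 := (ringChar.spec F 2).mp (by exact_mod_cast h0)
    rcases (Nat.dvd_prime Nat.prime_two).mp hd with h | h
    · exact CharP.ringChar_ne_one h
    · exact h2 h
  have : (univ.filter (fun a : F => a * a = 1)) = {1, -1} := by
    ext a
    simp [mul_self_eq_one_iff]
  rw [this, Finset.card_insert_of_notMem (by simp [Ne.symm hne]), Finset.card_singleton]

lemma card_char2 (h2 : ringChar F = 2) :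
    Fintype.card {M : Matrix (Fin 2) (Fin 2) F // M * M = 1} = Fintype.card F ^ 2 := by
  rw [card_eq_quad]
  have himg : (univ.filter (quadCond (F := F)))
      = (univ.filter (fun p : F × F × F => p.1 * p.1 + p.2.1 * p.2.2 = 1)).image
          (fun p => (p.1, p.2.1, p.2.2, p.1)) := by
    ext p
    simp only [mem_filter, mem_univ, true_and, mem_image, Prod.ext_iff, quad_char2 h2]
    constructor
    · rintro ⟨hd, he⟩
      exact ⟨(p.1, p.2.1, p.2.2.1), he, rfl, rfl, rfl, hd.symm⟩
    · rintro ⟨b, hb, h1, h2', h3, h4⟩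
      rw [← h1, ← h2', ← h3, ← h4]
      exact ⟨h1.symm ▸ rfl, hb⟩
  rw [himg, Finset.card_image_of_injective _
    (by intro x y h; simp [Prod.ext_iff] at h ⊢; tauto), triple_count, roots_char2 h2]
  have hq1 : 1 ≤ Fintype.card F := Fintype.card_pos
  rcases Nat.exists_eq_add_of_le hq1 with ⟨k, hk⟩
  rw [hk]
  simp only [Nat.add_sub_cancel_left]
  ring

lemma quad_odd (h2 : ringChar F ≠ 2) (p : F × F × F × F) :
    quadCond p ↔ ((p.2.2.2 = -p.1 ∧ p.1 * p.1 + p.2.1 * p.2.2.1 = 1)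
      ∨ p = (1, 0, 0, 1) ∨ p = (-1, 0, 0, -1)) := by
  have h0 : (2 : F) ≠ 0 := by
    intro h
    have hd : ringChar F ∣ 2 := (ringChar.spec F 2).mp (by exact_mod_cast h)
    rcases (Nat.dvd_prime Nat.prime_two).mp hd with h | h
    · exact CharP.ringChar_ne_one h
    · exact h2 h
  obtain ⟨a, b, c, d⟩ := p
  unfold quadCond
  simp only [Prod.mk.injEq]
  constructor
  · rintro ⟨e1, e2, e3, e4⟩
    by_cases ht : a + d = 0
    · exact Or.inl ⟨eq_neg_of_add_eq_zero_right ht, e1⟩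
    · have hb : b = 0 := by
        rcases mul_eq_zero.mp (show b * (a + d) = 0 by linear_combination e2) with h | h
        · exact h
        · exact absurd h ht
      have hc : c = 0 := by
        rcases mul_eq_zero.mp (show c * (a + d) = 0 by linear_combination e3) with h | h
        · exact h
        · exact absurd h ht
      have had : a = d := by
        have : (a - d) * (a + d) = 0 := by linear_combination e1 - e4
        rcases mul_eq_zero.mp this with h | h
        · exact sub_eq_zero.mp h
        · exact absurd h ht
      have ha : a * a = 1 := by rw [hb] at e1; linear_combination e1
      rcases mul_self_eq_one_iff.mp ha with h | h
      · exact Or.inr (Or.inl ⟨h, hb, hc, had ▸ h⟩)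
      · exact Or.inr (Or.inr ⟨h, hb, hc, had ▸ h⟩)
  · rintro (⟨hd, e1⟩ | ⟨rfl, rfl, rfl, rfl⟩ | ⟨rfl, rfl, rfl, rfl⟩)
    · rw [hd]
      exact ⟨e1, by ring, by ring, by linear_combination e1⟩
    · norm_num
    · norm_num

lemma card_odd (h2 : ringChar F ≠ 2) :
    Fintype.card {M : Matrix (Fin 2) (Fin 2) F // M * M = 1}
      = Fintype.card F ^ 2 + Fintype.card F + 2 := by
  have hne : (-1 : F) ≠ 1 := by
    intro h
    have h0 : (2 : F) = 0 := by linear_combination -h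
    have hd : ringChar F ∣ 2 := (ringChar.spec F 2).mp (by exact_mod_cast h0)
    rcases (Nat.dvd_prime Nat.prime_two).mp hd with h | h
    · exact CharP.ringChar_ne_one h
    · exact h2 h
  rw [card_eq_quad]
  have hsplit : (univ.filter (quadCond (F := F)))
      = ((univ.filter (fun p : F × F × F => p.1 * p.1 + p.2.1 * p.2.2 = 1)).image
          (fun p => (p.1, p.2.1, p.2.2, -p.1)))
        ∪ {((1 : F), (0 : F), (0 : F), (1 : F)), ((-1 : F), (0 : F), (0 : F), (-1 : F))} := by
    ext p
    simp only [mem_filter, mem_univ, true_and, mem_image, mem_union, mem_insert,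
      mem_singleton, Prod.ext_iff, quad_odd h2]
    constructor
    · rintro (⟨hd, he⟩ | h | h)
      · exact Or.inl ⟨(p.1, p.2.1, p.2.2.1), he, rfl, rfl, rfl, hd.symm⟩
      · exact Or.inr (Or.inl h)
      · exact Or.inr (Or.inr h)
    · rintro (⟨b, hb, h1, h2', h3, h4⟩ | h | h)
      · exact Or.inl ⟨by rw [← h4, ← h1], by rw [← h1, ← h2', ← h3]; exact hb⟩
      · exact Or.inr (Or.inl h)
      · exact Or.inr (Or.inr h)
  rw [hsplit, Finset.card_union_of_disjoint, Finset.card_image_of_injective _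
      (by intro x y h; simp [Prod.ext_iff] at h ⊢; tauto), triple_count, roots_odd h2]
  · have hq1 : 1 ≤ Fintype.card F := Fintype.card_pos
    rw [Finset.card_insert_of_notMem (by simp [Prod.ext_iff, hne, Ne.symm hne]),
      Finset.card_singleton]
    rcases Nat.exists_eq_add_of_le hq1 with ⟨k, hk⟩
    rw [hk]
    simp only [Nat.add_sub_cancel_left]
    ring
  · rw [Finset.disjoint_left]
    rintro p hp hmem
    simp only [mem_image, mem_filter, mem_univ, true_and, Prod.ext_iff] at hp
    simp only [mem_insert, mem_singleton, Prod.ext_iff] at hmem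
    obtain ⟨b, hb, h1, h2', h3, h4⟩ := hp
    rcases hmem with ⟨g1, g2, g3, g4⟩ | ⟨g1, g2, g3, g4⟩
    · exact hne (by linear_combination h1 + g1 + h4 + g4)
    · exact hne (by linear_combination -h1 - g1 - h4 - g4)

lemma card_sub :
    Fintype.card {M : Matrix (Fin 2) (Fin 2) F // M * M = 1 ∧ M ≠ 1} + 1
      = Fintype.card {M : Matrix (Fin 2) (Fin 2) F // M * M = 1} := by
  rw [Fintype.card_subtype, Fintype.card_subtype]
  have h1 : (univ.filter (fun M : Matrix (Fin 2) (Fin 2) F => M * M = 1))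
      = insert 1 (univ.filter (fun M : Matrix (Fin 2) (Fin 2) F => M * M = 1 ∧ M ≠ 1)) := by
    ext M
    simp only [mem_filter, mem_univ, true_and, mem_insert]
    by_cases hM : M = 1 <;> simp [hM]
  rw [h1, Finset.card_insert_of_notMem (by simp)]

/-- The number of non-identity involutions in `GL(2,𝔽_q)` is `q² − 1` when `q` is even
and `q² + q + 1` when `q` is odd. -/
theorem stmt_8 {F : Type} [Field F] [Fintype F] [DecidableEq F] (q : ℕ)
    (hq : Fintype.card F = q) :
    Nat.card {A : GL (Fin 2) F // A * A = 1 ∧ A ≠ 1}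
      = if Even q then q ^ 2 - 1 else q ^ 2 + q + 1 := by
  have hcard : Nat.card {A : GL (Fin 2) F // A * A = 1 ∧ A ≠ 1}
      = Fintype.card {M : Matrix (Fin 2) (Fin 2) F // M * M = 1 ∧ M ≠ 1} := by
    rw [Nat.card_congr glEquiv, Nat.card_eq_fintype_card]
  rw [hcard]
  by_cases hchar : ringChar F = 2
  · have heven : Even q := by
      rw [← hq, Nat.even_iff]
      exact FiniteField.even_card_iff_char_two.mp hchar
    rw [if_pos heven]
    have := card_sub (F := F)
    rw [card_char2 hchar, hq] at this
    omega
  · have hodd : ¬ Even q := by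
      rw [← hq, Nat.even_iff]
      intro h
      exact hchar (FiniteField.even_card_iff_char_two.mpr h)
    rw [if_neg hodd]
    have := card_sub (F := F)
    rw [card_odd hchar, hq] at this
    omega
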